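/- Let q ≥ 1 be an integer, γ ∈ (0,1) and β ∈ (0,1), and set α_n := 1 − γ/n^β. Then sup_{t ∈ [0,1]} | (qγ/(2 n^{β+1})) · Λ_q(n,t) − t | → 0 as n → ∞; that is, Λ_q(n,t) = (2 n^{β+1}/(qγ)) · t · (1 + o(1)) uniformly in t ∈ [0,1]. -/

import Mathlib

open Finset Filter

lemma geom_closed {ρ : ℝ} (h1 : ρ < 1) (n : ℕ) :
    ∑ k ∈ range n, ρ ^ k = (1 - ρ ^ n) / (1 - ρ) := by
  rw [geom_sum_eq h1.ne n, div_eq_div_iff (sub_ne_zero.2 h1.ne) (sub_ne_zero.2 h1.ne')]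
  ring

lemma row_sum (ρ : ℝ) {m i : ℕ} (h1 : 1 ≤ i) (h2 : i ≤ m) :
    ∑ j ∈ Icc 1 m, ρ ^ (Nat.dist i j)
      = (∑ k ∈ range i, ρ ^ k) + ρ * ∑ k ∈ range (m - i), ρ ^ k := by
  have hsplit : ∑ j ∈ Ioc 0 i, ρ ^ (Nat.dist i j) + ∑ j ∈ Ioc i m, ρ ^ (Nat.dist i j)
      = ∑ j ∈ Ioc 0 m, ρ ^ (Nat.dist i j) :=
    Finset.sum_Ioc_consecutive _ (Nat.zero_le i) h2
  have e0 : (Icc 1 m : Finset ℕ) = Ioc 0 m := Finset.Icc_add_one_left_eq_Ioc 0 m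
  have eA : ∑ j ∈ Ioc 0 i, ρ ^ (Nat.dist i j) = ∑ k ∈ range i, ρ ^ k := by
    rw [← Finset.Icc_add_one_left_eq_Ioc, ← Finset.Ico_add_one_right_eq_Icc, Finset.sum_Ico_eq_sum_range]
    simp only [zero_add, Nat.succ_sub_one, Nat.add_sub_cancel]
    rw [← Finset.sum_range_reflect (fun k => ρ ^ k) i]
    refine Finset.sum_congr rfl fun k hk => ?_
    rw [Finset.mem_range] at hk
    rw [Nat.dist_eq_sub_of_le_right (by omega)]
    congr 1
    omega
  have eB : ∑ j ∈ Ioc i m, ρ ^ (Nat.dist i j) = ρ * ∑ k ∈ range (m - i), ρ ^ k := by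
    rw [← Finset.Icc_add_one_left_eq_Ioc, ← Finset.Ico_add_one_right_eq_Icc, Finset.sum_Ico_eq_sum_range]
    rw [Finset.mul_sum]
    have hcard : m + 1 - (i + 1) = m - i := by omega
    rw [hcard]
    refine Finset.sum_congr rfl fun k hk => ?_
    rw [Nat.dist_eq_sub_of_le (by omega)]
    have : i + 1 + k - i = k + 1 := by omega
    rw [this, pow_succ]
    ring
  rw [e0, ← hsplit, eA, eB]

lemma lam_eq {ρ : ℝ} (h1 : ρ < 1) (m : ℕ) :
    ∑ i ∈ Icc 1 m, ∑ j ∈ Icc 1 m, ρ ^ (Nat.dist i j)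
      = (m : ℝ) * (1 + ρ) / (1 - ρ) - (∑ i ∈ Icc 1 m, ρ ^ i) / (1 - ρ)
        - ρ * (∑ i ∈ Icc 1 m, ρ ^ (m - i)) / (1 - ρ) := by
  have step1 : ∑ i ∈ Icc 1 m, ∑ j ∈ Icc 1 m, ρ ^ (Nat.dist i j)
      = ∑ i ∈ Icc 1 m, ((1 + ρ) / (1 - ρ) - ρ ^ i / (1 - ρ) - ρ * ρ ^ (m - i) / (1 - ρ)) := by
    refine Finset.sum_congr rfl fun i hi => ?_
    rw [Finset.mem_Icc] at hi
    rw [row_sum ρ hi.1 hi.2, geom_closed h1, geom_closed h1]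
    ring
  rw [step1]
  rw [Finset.sum_sub_distrib, Finset.sum_sub_distrib, Finset.sum_const, Nat.card_Icc]
  simp only [Nat.add_sub_cancel, nsmul_eq_mul]
  rw [← Finset.sum_div, ← Finset.sum_div, ← Finset.mul_sum]
  ring

lemma lam_bounds {ρ : ℝ} (h0 : 0 ≤ ρ) (h1 : ρ < 1) (m : ℕ) :
    |(∑ i ∈ Icc 1 m, ∑ j ∈ Icc 1 m, ρ ^ (Nat.dist i j))
      - (m : ℝ) * (1 + ρ) / (1 - ρ)| ≤ 2 / (1 - ρ) ^ 2 := by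
  have hpos : 0 < 1 - ρ := by linarith
  have geo : ∀ k : ℕ, ∑ j ∈ range k, ρ ^ j ≤ 1 / (1 - ρ) := by
    intro k
    rw [geom_closed h1]
    have : (0:ℝ) ≤ ρ ^ k := pow_nonneg h0 k
    gcongr
    linarith
  have hT1 : ∑ i ∈ Icc 1 m, ρ ^ i ≤ 1 / (1 - ρ) := by
    calc ∑ i ∈ Icc 1 m, ρ ^ i ≤ ∑ i ∈ range (m + 1), ρ ^ i := by
          apply Finset.sum_le_sum_of_subset_of_nonneg
          · intro x hx
            rw [Finset.mem_Icc] at hx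
            rw [Finset.mem_range]
            omega
          · intro x _ _
            exact pow_nonneg h0 x
      _ ≤ 1 / (1 - ρ) := geo _
  have hT1' : (0:ℝ) ≤ ∑ i ∈ Icc 1 m, ρ ^ i :=
    Finset.sum_nonneg fun i _ => pow_nonneg h0 i
  have hT2 : ∑ i ∈ Icc 1 m, ρ ^ (m - i) ≤ 1 / (1 - ρ) := by
    have : ∑ i ∈ Icc 1 m, ρ ^ (m - i) = ∑ k ∈ range m, ρ ^ k := by
      rw [← Finset.Ico_add_one_right_eq_Icc, Finset.sum_Ico_eq_sum_range]
      simp only [Nat.succ_sub_one, Nat.add_sub_cancel]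
      rw [← Finset.sum_range_reflect (fun k => ρ ^ k) m]
      refine Finset.sum_congr rfl fun k hk => ?_
      rw [Finset.mem_range] at hk
      congr 1
      omega
    rw [this]
    exact geo m
  have hT2' : (0:ℝ) ≤ ∑ i ∈ Icc 1 m, ρ ^ (m - i) :=
    Finset.sum_nonneg fun i _ => pow_nonneg h0 _
  rw [lam_eq h1 m]
  rw [abs_le]
  constructor
  · have e1 : (∑ i ∈ Icc 1 m, ρ ^ i) / (1 - ρ) ≤ (1 / (1 - ρ)) / (1 - ρ) := by gcongr
    have e2 : ρ * (∑ i ∈ Icc 1 m, ρ ^ (m - i)) / (1 - ρ) ≤ (1 * (1 / (1 - ρ))) / (1 - ρ) := by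
      gcongr
    have e3 : (1 / (1 - ρ)) / (1 - ρ) = 1 / (1 - ρ) ^ 2 := by
      rw [div_div, sq]
    have e4 : (1 * (1 / (1 - ρ))) / (1 - ρ) = 1 / (1 - ρ) ^ 2 := by
      rw [one_mul, div_div, sq]
    rw [e3] at e1
    rw [e4] at e2
    have : (2:ℝ) / (1 - ρ) ^ 2 = 1 / (1 - ρ) ^ 2 + 1 / (1 - ρ) ^ 2 := by ring
    linarith
  · have e1 : (0:ℝ) ≤ (∑ i ∈ Icc 1 m, ρ ^ i) / (1 - ρ) := by positivity
    have e2 : (0:ℝ) ≤ ρ * (∑ i ∈ Icc 1 m, ρ ^ (m - i)) / (1 - ρ) := by positivity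
    have e3 : (0:ℝ) ≤ 2 / (1 - ρ) ^ 2 := by positivity
    linarith

/-- `Λ_q(n,t) = ∑_{i=1}^{⌊nt⌋} ∑_{j=1}^{⌊nt⌋} α^{q|i−j|}`. -/
noncomputable def Lam (α : ℝ) (q n : ℕ) (t : ℝ) : ℝ :=
  ∑ i ∈ Finset.Icc 1 ⌊(n : ℝ) * t⌋₊, ∑ j ∈ Finset.Icc 1 ⌊(n : ℝ) * t⌋₊,
    α ^ (q * Nat.dist i j)

lemma key_est (q : ℕ) (hq : 1 ≤ q) {γ β : ℝ} (hγ0 : 0 < γ) {n : ℕ} (hn : 1 ≤ n)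
    (hE1 : γ / (n : ℝ) ^ β < 1) {t : ℝ} (ht0 : 0 ≤ t) (ht1 : t ≤ 1) :
    |((q : ℝ) * γ / (2 * (n : ℝ) ^ (β + 1))) * Lam (1 - γ / (n : ℝ) ^ β) q n t - t|
      ≤ (q : ℝ) * (n : ℝ) ^ β
          / ((n : ℝ) * γ * (∑ k ∈ range q, (1 - γ / (n : ℝ) ^ β) ^ k) ^ 2)
        + (q : ℝ) * (1 + (1 - γ / (n : ℝ) ^ β) ^ q)
          / (2 * (∑ k ∈ range q, (1 - γ / (n : ℝ) ^ β) ^ k) * (n : ℝ))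
        + |(q : ℝ) * (1 + (1 - γ / (n : ℝ) ^ β) ^ q)
          / (2 * (∑ k ∈ range q, (1 - γ / (n : ℝ) ^ β) ^ k)) - 1| := by
  have hn0 : (0:ℝ) < n := by exact_mod_cast hn
  have hnb : (0:ℝ) < (n : ℝ) ^ β := Real.rpow_pos_of_pos hn0 β
  set E := γ / (n : ℝ) ^ β with hEdef
  have hE0 : 0 < E := div_pos hγ0 hnb
  set A := 1 - E with hAdef
  set S := ∑ k ∈ range q, A ^ k with hSdef
  set ρ := A ^ q with hρdef
  have hA0 : 0 < A := by rw [hAdef]; linarith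
  have hA1 : A < 1 := by rw [hAdef]; linarith
  have hρ0 : 0 < ρ := pow_pos hA0 q
  have hρ1 : ρ < 1 := by
    rw [hρdef]
    exact pow_lt_one₀ hA0.le hA1 (by omega)
  have hS1 : (1:ℝ) ≤ S := by
    rw [hSdef]
    calc (1:ℝ) = A ^ 0 := (pow_zero A).symm
      _ ≤ ∑ k ∈ range q, A ^ k :=
          Finset.single_le_sum (f := fun k => A ^ k)
            (fun k _ => pow_nonneg hA0.le k) (Finset.mem_range.2 (by omega))
  have hS0 : (0:ℝ) < S := lt_of_lt_of_le one_pos hS1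
  have hkey : 1 - ρ = E * S := by
    have h := geom_sum_mul A q
    rw [← hSdef] at h
    rw [hρdef]
    linear_combination h - S * hAdef
  have h1ρ : (0:ℝ) < 1 - ρ := by rw [hkey]; positivity
  set m := ⌊(n : ℝ) * t⌋₊ with hm
  have hm1 : (m : ℝ) ≤ (n : ℝ) * t := Nat.floor_le (by positivity)
  have hm2 : (n : ℝ) * t < m + 1 := Nat.lt_floor_add_one _
  have hlam : Lam A q n t = ∑ i ∈ Icc 1 m, ∑ j ∈ Icc 1 m, ρ ^ (Nat.dist i j) := by
    rw [Lam]
    exact Finset.sum_congr rfl fun i _ => Finset.sum_congr rfl fun j _ => by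
      rw [hρdef, ← pow_mul]
  set c := (q : ℝ) * γ / (2 * (n : ℝ) ^ (β + 1)) with hc
  have hc0 : (0:ℝ) ≤ c := by rw [hc]; positivity
  have hrpow : (n : ℝ) ^ (β + 1) = (n : ℝ) ^ β * n := by
    rw [Real.rpow_add hn0, Real.rpow_one]
  have I1 : c * (2 / (1 - ρ) ^ 2) = (q : ℝ) * (n : ℝ) ^ β / ((n : ℝ) * γ * S ^ 2) := by
    rw [hkey, hc, hrpow, hEdef]
    field_simp
  set κ := c * ((1 + ρ) / (1 - ρ)) with hκdef
  have I2 : κ = (q : ℝ) * (1 + ρ) / (2 * S * (n : ℝ)) := by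
    rw [hκdef, hkey, hc, hrpow, hEdef]
    field_simp
  have I3 : κ * (n : ℝ) = (q : ℝ) * (1 + ρ) / (2 * S) := by
    rw [hκdef, hkey, hc, hrpow, hEdef]
    field_simp
  have hκ0 : (0:ℝ) ≤ κ := by
    rw [hκdef]
    exact mul_nonneg hc0 (div_nonneg (by linarith) h1ρ.le)
  have habs := lam_bounds hρ0.le hρ1 m
  have h2 : |c * Lam A q n t - c * ((m : ℝ) * (1 + ρ) / (1 - ρ))| ≤ c * (2 / (1 - ρ) ^ 2) := by
    rw [hlam, ← mul_sub, abs_mul, abs_of_nonneg hc0]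
    exact mul_le_mul_of_nonneg_left habs hc0
  have hcM : c * ((m : ℝ) * (1 + ρ) / (1 - ρ)) = κ * m := by rw [hκdef]; ring
  have h3 : |κ * (m : ℝ) - t| ≤ κ + |κ * (n : ℝ) - 1| := by
    have expand : κ * (m : ℝ) - t = κ * ((m : ℝ) - (n : ℝ) * t) + (κ * (n : ℝ) - 1) * t := by
      ring
    have a2 : |(m : ℝ) - (n : ℝ) * t| ≤ 1 := by
      rw [abs_le]; constructor <;> linarith
    have a4 : |t| ≤ 1 := by rw [abs_le]; exact ⟨by linarith, ht1⟩
    calc |κ * (m : ℝ) - t| = |κ * ((m : ℝ) - (n : ℝ) * t) + (κ * (n : ℝ) - 1) * t| := by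
          rw [expand]
      _ ≤ |κ * ((m : ℝ) - (n : ℝ) * t)| + |(κ * (n : ℝ) - 1) * t| := abs_add_le _ _
      _ ≤ κ + |κ * (n : ℝ) - 1| := by
          rw [abs_mul κ, abs_mul (κ * (n : ℝ) - 1) t, abs_of_nonneg hκ0]
          have b1 : κ * |(m : ℝ) - (n : ℝ) * t| ≤ κ * 1 := by
            exact mul_le_mul_of_nonneg_left a2 hκ0
          have b2 : |κ * (n : ℝ) - 1| * |t| ≤ |κ * (n : ℝ) - 1| * 1 :=
            mul_le_mul_of_nonneg_left a4 (abs_nonneg _)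
          linarith
  calc |c * Lam A q n t - t|
      ≤ |c * Lam A q n t - c * ((m : ℝ) * (1 + ρ) / (1 - ρ))|
        + |c * ((m : ℝ) * (1 + ρ) / (1 - ρ)) - t| := abs_sub_le _ _ _
    _ ≤ c * (2 / (1 - ρ) ^ 2) + (κ + |κ * (n : ℝ) - 1|) := by
        refine add_le_add h2 ?_
        rw [hcM]
        exact h3
    _ = (q : ℝ) * (n : ℝ) ^ β / ((n : ℝ) * γ * S ^ 2)
        + (q : ℝ) * (1 + ρ) / (2 * S * (n : ℝ))
        + |(q : ℝ) * (1 + ρ) / (2 * S) - 1| := by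
        rw [I1, I3, I2]
        ring


/-- For `β < 1` and `α_n = 1 − γ/n^β`,
`(qγ/(2n^{β+1})) Λ_q(n,t) → t` uniformly in `t ∈ [0,1]`. -/
theorem stmt_4 (q : ℕ) (hq : 1 ≤ q) (γ β : ℝ)
    (hγ : γ ∈ Set.Ioo (0:ℝ) 1) (hβ : β ∈ Set.Ioo (0:ℝ) 1) :
    TendstoUniformlyOn
      (fun (n : ℕ) (t : ℝ) =>
        ((q : ℝ) * γ / (2 * (n : ℝ) ^ (β + 1))) * Lam (1 - γ / (n : ℝ) ^ β) q n t)
      (fun t => t) Filter.atTop (Set.Icc 0 1) := by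
  obtain ⟨hγ0, hγ1⟩ := hγ
  obtain ⟨hβ0, hβ1⟩ := hβ
  have hq0 : (q:ℝ) ≠ 0 := by positivity
  have hnatTop : Tendsto (fun n : ℕ => (n : ℝ)) atTop atTop := tendsto_natCast_atTop_atTop
  have hnb : Tendsto (fun n : ℕ => (n : ℝ) ^ β) atTop atTop :=
    (tendsto_rpow_atTop hβ0).comp hnatTop
  have hε : Tendsto (fun n : ℕ => γ / (n : ℝ) ^ β) atTop (nhds 0) :=
    tendsto_const_nhds.div_atTop hnb
  have hα : Tendsto (fun n : ℕ => 1 - γ / (n : ℝ) ^ β) atTop (nhds 1) := by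
    have := tendsto_const_nhds (x := (1:ℝ)) (f := atTop (α := ℕ)) |>.sub hε
    simpa using this
  have hR : Tendsto (fun n : ℕ => (1 - γ / (n : ℝ) ^ β) ^ q) atTop (nhds 1) := by
    simpa using hα.pow q
  have hS : Tendsto (fun n : ℕ => ∑ k ∈ range q, (1 - γ / (n : ℝ) ^ β) ^ k)
      atTop (nhds (q : ℝ)) := by
    have h := tendsto_finset_sum (range q) (fun k (_ : k ∈ range q) => hα.pow k)
    simpa using h
  -- term 1
  have hx : Tendsto (fun n : ℕ => (n : ℝ) ^ β / (n : ℝ)) atTop (nhds 0) := by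
    have h1 : Tendsto (fun x : ℝ => x ^ (-(1 - β))) atTop (nhds 0) :=
      tendsto_rpow_neg_atTop (by linarith)
    refine (h1.comp hnatTop).congr' ?_
    filter_upwards [eventually_ge_atTop 1] with n hn
    have hn0 : (0:ℝ) < n := by exact_mod_cast hn
    show (n : ℝ) ^ (-(1 - β)) = (n : ℝ) ^ β / (n : ℝ)
    rw [show -(1 - β) = β - 1 by ring, Real.rpow_sub hn0, Real.rpow_one]
  have hterm1 : Tendsto
      (fun n : ℕ => (q : ℝ) * (n : ℝ) ^ β
        / ((n : ℝ) * γ * (∑ k ∈ range q, (1 - γ / (n : ℝ) ^ β) ^ k) ^ 2))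
      atTop (nhds 0) := by
    have h := (tendsto_const_nhds (x := (q:ℝ)/γ) (f := atTop (α := ℕ))|>.mul hx).mul
      ((hS.pow 2).inv₀ (by positivity))
    rw [show (q:ℝ)/γ * 0 * (((q:ℝ))^2)⁻¹ = 0 by ring] at h
    exact h.congr fun n => by ring
  -- term 2/3
  have hhalf : Tendsto (fun n : ℕ => (q : ℝ) * (1 + (1 - γ / (n : ℝ) ^ β) ^ q)
      / (2 * (∑ k ∈ range q, (1 - γ / (n : ℝ) ^ β) ^ k))) atTop (nhds 1) := by
    have ha : Tendsto (fun n : ℕ => (q:ℝ) * (1 + (1 - γ / (n : ℝ) ^ β) ^ q)) atTop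
        (nhds ((q:ℝ) * (1 + 1))) :=
      tendsto_const_nhds.mul ((tendsto_const_nhds (x := (1:ℝ))).add hR)
    have hb2 : Tendsto (fun n : ℕ => 2 * ∑ k ∈ range q, (1 - γ / (n : ℝ) ^ β) ^ k) atTop
        (nhds (2 * (q:ℝ))) :=
      tendsto_const_nhds.mul hS
    have h := ha.div hb2 (by positivity)
    have : (q : ℝ) * (1 + 1) / (2 * (q:ℝ)) = 1 := by field_simp; ring
    rwa [this] at h
  have hinv : Tendsto (fun n : ℕ => ((n : ℝ))⁻¹) atTop (nhds 0) :=
    tendsto_inv_atTop_zero.comp hnatTop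
  have hterm2 : Tendsto (fun n : ℕ => (q : ℝ) * (1 + (1 - γ / (n : ℝ) ^ β) ^ q)
      / (2 * (∑ k ∈ range q, (1 - γ / (n : ℝ) ^ β) ^ k) * (n : ℝ))) atTop (nhds 0) := by
    have h := hhalf.mul hinv
    rw [show (1:ℝ) * 0 = 0 by ring] at h
    exact h.congr fun n => by ring
  have hterm3 : Tendsto (fun n : ℕ => |(q : ℝ) * (1 + (1 - γ / (n : ℝ) ^ β) ^ q)
      / (2 * (∑ k ∈ range q, (1 - γ / (n : ℝ) ^ β) ^ k)) - 1|) atTop (nhds 0) := by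
    have h := (hhalf.sub (tendsto_const_nhds (x := (1:ℝ)))).abs
    simpa using h
  have hb : Tendsto (fun n : ℕ =>
      (q : ℝ) * (n : ℝ) ^ β
          / ((n : ℝ) * γ * (∑ k ∈ range q, (1 - γ / (n : ℝ) ^ β) ^ k) ^ 2)
        + (q : ℝ) * (1 + (1 - γ / (n : ℝ) ^ β) ^ q)
          / (2 * (∑ k ∈ range q, (1 - γ / (n : ℝ) ^ β) ^ k) * (n : ℝ))
        + |(q : ℝ) * (1 + (1 - γ / (n : ℝ) ^ β) ^ q)
          / (2 * (∑ k ∈ range q, (1 - γ / (n : ℝ) ^ β) ^ k)) - 1|) atTop (nhds 0) := by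
    have h := (hterm1.add hterm2).add hterm3
    simpa using h
  rw [Metric.tendstoUniformlyOn_iff]
  intro δ hδ
  filter_upwards [hb.eventually_lt_const hδ, hε.eventually_lt_const one_pos,
    eventually_ge_atTop 1] with n h1 h2 h3
  intro t ht
  obtain ⟨ht0, ht1⟩ := ht
  rw [Real.dist_eq, abs_sub_comm]
  exact lt_of_le_of_lt (key_est q hq hγ0 h3 h2 ht0 ht1) h1
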